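/- Let Φ : ℝ⁵ → Lo¹₄ be the map Φ(t₁,t₂,t₃,t₄,t₅) = λ₁(t₁)λ₂(t₂)λ₃(t₃)λ₁(t₄)λ₂(t₅). Then Φ restricts to a homeomorphism from the open orthant O = {t ∈ ℝ⁵ : t₁ < 0, t₂ < 0, t₃ > 0, t₄ < 0, t₅ > 0} onto the set S of matrices L ∈ Lo¹₄ (with entries L₂₁ = x, L₃₁ = u, L₃₂ = y, L₄₁ = w, L₄₂ = v, L₄₃ = z) satisfying w = 0, u > 0, v > 0, xyz − xv − uz > 0, z > 0 and yz − v < 0. In particular S is nonempty and contractible. -/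

import Mathlib

open Matrix

/-- `λ_j(t) = I + t E_{j+1,j}` in `Lo¹₄` (here `j : Fin 3` is the `0`-indexed
version of `j ∈ {1,2,3}`, so the nonzero off-diagonal entry is in position
`(j+1, j)` of `Fin 4`, `0`-indexed). -/
noncomputable def lam (j : Fin 3) (t : ℝ) : Matrix (Fin 4) (Fin 4) ℝ :=
  1 + t • Matrix.single j.succ j.castSucc (1 : ℝ)

/-- The map `Φ(t₁,…,t₅) = λ₁(t₁)λ₂(t₂)λ₃(t₃)λ₁(t₄)λ₂(t₅)`. -/
noncomputable def Phi (t : Fin 5 → ℝ) : Matrix (Fin 4) (Fin 4) ℝ :=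
  lam 0 (t 0) * lam 1 (t 1) * lam 2 (t 2) * lam 0 (t 3) * lam 1 (t 4)

/-- The open orthant `O = {t ∈ ℝ⁵ : t₁ < 0, t₂ < 0, t₃ > 0, t₄ < 0, t₅ > 0}`. -/
def Orth : Set (Fin 5 → ℝ) :=
  {t | t 0 < 0 ∧ t 1 < 0 ∧ 0 < t 2 ∧ t 3 < 0 ∧ 0 < t 4}

/-- The set `S` of matrices `L ∈ Lo¹₄` (with entries `x = L₂₁, u = L₃₁,
y = L₃₂, w = L₄₁, v = L₄₂, z = L₄₃`, here `0`-indexed) satisfying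
`w = 0`, `u > 0`, `v > 0`, `xyz − xv − uz > 0`, `z > 0` and `yz − v < 0`. -/
def BLstratum : Set (Matrix (Fin 4) (Fin 4) ℝ) :=
  {L | ((∀ i, L i i = 1) ∧ ∀ i j : Fin 4, i < j → L i j = 0) ∧
    L 3 0 = 0 ∧ 0 < L 2 0 ∧ 0 < L 3 1 ∧
    0 < L 1 0 * L 2 1 * L 3 2 - L 1 0 * L 3 1 - L 2 0 * L 3 2 ∧
    0 < L 3 2 ∧ L 2 1 * L 3 2 - L 3 1 < 0}

theorem phi_eq (t : Fin 5 → ℝ) : Phi t =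
    !![1,0,0,0; t 0 + t 3,1,0,0; t 1 * t 3, t 1 + t 4,1,0; 0, t 2 * t 4, t 2, 1] := by
  have h1 : Fin.succ (0 : Fin 3) = (1 : Fin 4) := rfl
  have h2 : Fin.succ (1 : Fin 3) = (2 : Fin 4) := rfl
  have h3 : Fin.succ (2 : Fin 3) = (3 : Fin 4) := rfl
  have h4 : Fin.castSucc (0 : Fin 3) = (0 : Fin 4) := rfl
  have h5 : Fin.castSucc (1 : Fin 3) = (1 : Fin 4) := rfl
  have h6 : Fin.castSucc (2 : Fin 3) = (2 : Fin 4) := rfl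
  ext i j
  fin_cases i <;> fin_cases j <;>
    simp [Phi, lam, Matrix.mul_apply, Fin.sum_univ_four, Matrix.single,
      Matrix.one_apply, h1, h2, h3, h4, h5, h6]

/-- The inverse map. -/
noncomputable def Psi (L : Matrix (Fin 4) (Fin 4) ℝ) : Fin 5 → ℝ :=
  ![L 1 0 - L 2 0 * L 3 2 / (L 2 1 * L 3 2 - L 3 1),
    (L 2 1 * L 3 2 - L 3 1) / L 3 2,
    L 3 2,
    L 2 0 * L 3 2 / (L 2 1 * L 3 2 - L 3 1),
    L 3 1 / L 3 2]

theorem phi_mapsTo : Set.MapsTo Phi Orth BLstratum := by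
  rintro t ⟨h0, h1, h2, h3, h4⟩
  simp only [BLstratum, Set.mem_setOf_eq]
  rw [phi_eq]
  refine ⟨⟨?_, ?_⟩, by simp, ?_, ?_, ?_, ?_, ?_⟩
  · intro i; fin_cases i <;> simp
  · intro i j hij
    fin_cases i <;> fin_cases j <;> first | (exact absurd hij (by decide)) | simp
  · simpa using mul_pos_of_neg_of_neg h1 h3
  · simpa using mul_pos h2 h4
  · have : (t 0 + t 3) * (t 1 + t 4) * (t 2) - (t 0 + t 3) * (t 2 * t 4)
        - (t 1 * t 3) * (t 2) = t 0 * t 1 * t 2 := by ring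
    simpa [this] using mul_pos (mul_pos_of_neg_of_neg h0 h1) h2
  · simpa using h2
  · have : (t 1 + t 4) * t 2 - t 2 * t 4 = t 1 * t 2 := by ring
    simpa [this] using mul_neg_of_neg_of_pos h1 h2

theorem psi_phi {t : Fin 5 → ℝ} (ht : t ∈ Orth) : Psi (Phi t) = t := by
  obtain ⟨h0, h1, h2, h3, h4⟩ := ht
  have hz : t 2 ≠ 0 := ne_of_gt h2
  have h1' : t 1 ≠ 0 := ne_of_lt h1
  have h12 : t 1 * t 2 ≠ 0 := mul_ne_zero (ne_of_lt h1) hz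
  have hD : (t 1 + t 4) * t 2 - t 2 * t 4 ≠ 0 := by
    rw [show (t 1 + t 4) * t 2 - t 2 * t 4 = t 1 * t 2 by ring]; exact h12
  rw [phi_eq]
  funext i
  fin_cases i <;> simp [Psi, h1'] <;> field_simp <;> ring_nf <;> generalize t 1 = a at * <;> field_simp <;> ring

theorem psi_mem {L : Matrix (Fin 4) (Fin 4) ℝ} (hL : L ∈ BLstratum) : Psi L ∈ Orth := by
  obtain ⟨-, -, hu, hv, hdet, hz, hD⟩ := hL
  refine ⟨?_, div_neg_of_neg_of_pos hD hz, hz,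
    div_neg_of_pos_of_neg (mul_pos hu hz) hD, div_pos hv hz⟩
  have key : L 1 0 - L 2 0 * L 3 2 / (L 2 1 * L 3 2 - L 3 1)
      = (L 1 0 * L 2 1 * L 3 2 - L 1 0 * L 3 1 - L 2 0 * L 3 2) / (L 2 1 * L 3 2 - L 3 1) := by
    rw [eq_div_iff (ne_of_lt hD), sub_mul, div_mul_cancel₀ _ (ne_of_lt hD)]
    ring
  show L 1 0 - L 2 0 * L 3 2 / (L 2 1 * L 3 2 - L 3 1) < 0
  rw [key]
  exact div_neg_of_pos_of_neg hdet hD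

theorem phi_psi {L : Matrix (Fin 4) (Fin 4) ℝ} (hL : L ∈ BLstratum) : Phi (Psi L) = L := by
  obtain ⟨⟨hdiag, hup⟩, hw, hu, hv, hdet, hz, hD⟩ := hL
  have hz' : L 3 2 ≠ 0 := ne_of_gt hz
  have hD' : L 2 1 * L 3 2 - L 3 1 ≠ 0 := ne_of_lt hD
  rw [phi_eq]
  ext i j
  fin_cases i <;> fin_cases j <;>
    simp [Psi, hdiag 0, hdiag 1, hdiag 2, hdiag 3, hw,
      hup 0 1 (by decide), hup 0 2 (by decide), hup 0 3 (by decide),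
      hup 1 2 (by decide), hup 1 3 (by decide), hup 2 3 (by decide)] <;>
    field_simp <;> ring

theorem orth_convex : Convex ℝ Orth := by
  have : Orth = {t : Fin 5 → ℝ | t 0 < 0} ∩ ({t | t 1 < 0} ∩ ({t | 0 < t 2} ∩
      ({t | t 3 < 0} ∩ {t | 0 < t 4}))) := rfl
  rw [this]
  have lin : ∀ i : Fin 5, IsLinearMap ℝ (fun t : Fin 5 → ℝ => t i) :=
    fun i => ⟨fun _ _ => rfl, fun _ _ => rfl⟩
  exact (convex_halfSpace_lt (lin 0) 0).inter ((convex_halfSpace_lt (lin 1) 0).inter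
    ((convex_halfSpace_gt (lin 2) 0).inter ((convex_halfSpace_lt (lin 3) 0).inter
    (convex_halfSpace_gt (lin 4) 0))))

theorem orth_nonempty : (Orth).Nonempty :=
  ⟨![-1, -1, 1, -1, 1], by constructor <;> simp⟩

theorem phi_continuous : Continuous Phi := by
  have hlam : ∀ (j : Fin 3) (f : (Fin 5 → ℝ) → ℝ), Continuous f →
      Continuous fun t => lam j (f t) := fun j f hf =>
    continuous_const.add (hf.smul continuous_const)
  exact ((((hlam 0 _ (continuous_apply 0)).matrix_mul
    (hlam 1 _ (continuous_apply 1))).matrix_mul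
    (hlam 2 _ (continuous_apply 2))).matrix_mul
    (hlam 0 _ (continuous_apply 3))).matrix_mul
    (hlam 1 _ (continuous_apply 4))

/-- `Φ` restricts to a homeomorphism from the open orthant `O`
onto `S`; in particular `S` is nonempty and contractible. -/
theorem stmt1 :
    (∃ h : ↥Orth ≃ₜ ↥BLstratum, ∀ t : ↥Orth, (h t : Matrix (Fin 4) (Fin 4) ℝ) = Phi ↑t) ∧
      BLstratum.Nonempty ∧ ContractibleSpace ↥BLstratum := by
  have ent : ∀ (i j : Fin 4), Continuous fun L : ↥BLstratum => (L : Matrix (Fin 4) (Fin 4) ℝ) i j :=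
    fun i j => (continuous_apply j).comp ((continuous_apply i).comp continuous_subtype_val)
  have hzc : ∀ L : ↥BLstratum, (L : Matrix (Fin 4) (Fin 4) ℝ) 3 2 ≠ 0 :=
    fun L => ne_of_gt L.2.2.2.2.2.2.1
  have hDc : ∀ L : ↥BLstratum, (L : Matrix (Fin 4) (Fin 4) ℝ) 2 1 *
      (L : Matrix (Fin 4) (Fin 4) ℝ) 3 2 - (L : Matrix (Fin 4) (Fin 4) ℝ) 3 1 ≠ 0 :=
    fun L => ne_of_lt L.2.2.2.2.2.2.2
  have hpsiC : Continuous fun L : ↥BLstratum => Psi (L : Matrix (Fin 4) (Fin 4) ℝ) := by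
    apply continuous_pi
    intro i
    fin_cases i <;> simp only [Psi, Matrix.cons_val_zero, Matrix.cons_val_one, Matrix.head_cons,
      Matrix.cons_val_two, Matrix.tail_cons, Matrix.cons_val_three, Matrix.cons_val_four]
    · exact (ent 1 0).sub (((ent 2 0).mul (ent 3 2)).div
        (((ent 2 1).mul (ent 3 2)).sub (ent 3 1)) hDc)
    · exact ((((ent 2 1).mul (ent 3 2)).sub (ent 3 1)).div (ent 3 2)) hzc
    · exact ent 3 2
    · exact ((ent 2 0).mul (ent 3 2)).div (((ent 2 1).mul (ent 3 2)).sub (ent 3 1)) hDc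
    · exact (ent 3 1).div (ent 3 2) hzc
  let e : ↥Orth ≃ₜ ↥BLstratum :=
    { toFun := fun t => ⟨Phi t, phi_mapsTo t.2⟩
      invFun := fun L => ⟨Psi L, psi_mem L.2⟩
      left_inv := fun t => Subtype.ext (psi_phi t.2)
      right_inv := fun L => Subtype.ext (phi_psi L.2)
      continuous_toFun := (phi_continuous.comp continuous_subtype_val).subtype_mk _
      continuous_invFun := hpsiC.subtype_mk _ }
  have hOc : ContractibleSpace ↥Orth := orth_convex.contractibleSpace orth_nonempty
  refine ⟨⟨e, fun t => rfl⟩, ?_, ?_⟩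
  · obtain ⟨t, ht⟩ := orth_nonempty
    exact ⟨Phi t, phi_mapsTo ht⟩
  · exact e.symm.contractibleSpace
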